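/- Let (F, ⊴) be a finite quasi-forest, let ν(t) = {s ∈ F : s ⊴ t} for t ∈ F, let 𝒱(F,⊴) = {ν(t) : t ∈ F} ∪ {∅}, and for t ∈ F let χ(t) = {p ∈ 𝒱(F,⊴) : t ∈ p}. Then there exists a linear order ≤ on 𝒱(F,⊴) such that (i) whenever p ⊊ q (proper inclusion) then p < q, and (ii) for every t ∈ F the set χ(t) is ≤-convex (if p < r < q and p, q ∈ χ(t), then r ∈ χ(t)). -/

import Mathlib

/-- Let `(F, ⊴)` be a finite quasi-forest, `ν(t) = {s : s ⊴ t}`,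
`𝒱(F,⊴) = {ν(t) : t ∈ F} ∪ {∅}`, and `χ(t) = {p ∈ 𝒱(F,⊴) : t ∈ p}`.  Then there is a
linear order `≤` on `𝒱(F,⊴)` such that (i) `p ⊊ q` implies `p < q`, and (ii) each `χ(t)`
is `≤`-convex. -/
theorem quasiForest_convex_linear_order {F : Type*} [Fintype F] (r : F → F → Prop)
    (hrefl : ∀ t, r t t) (htrans : ∀ s t u, r s t → r t u → r s u)
    (hforest : ∀ t s s', r s t → r s' t → r s s' ∨ r s' s) :
    ∃ le : {p : Set F // p ∈ ({S : Set F | ∃ t : F, S = {s : F | r s t}} ∪ {∅})} →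
           {p : Set F // p ∈ ({S : Set F | ∃ t : F, S = {s : F | r s t}} ∪ {∅})} → Prop,
      IsLinearOrder _ le ∧
      (∀ p q, p.1 ⊂ q.1 → le p q) ∧
      (∀ t : F, ∀ p q v, le p v → le v q → t ∈ p.1 → t ∈ q.1 → t ∈ v.1) := by
  classical
  -- a linear order on F whose strict part extends the strict part of r
  let h : F → ℕ := fun s => (Finset.univ.filter fun x => r x s).card
  have hmono : ∀ s u, r s u → ¬ r u s → h s < h u := by
    intro s u hsu hus
    apply Finset.card_lt_card
    constructor
    · intro x hx
      simp only [Finset.mem_filter] at *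
      exact ⟨hx.1, htrans _ _ _ hx.2 hsu⟩
    · intro hsub
      have hu : u ∈ Finset.univ.filter fun x => r x u := by simp [hrefl]
      have := hsub hu
      simp only [Finset.mem_filter] at this
      exact hus this.2
  let key : F → ℕ ×ₗ ℕ := fun s => toLex (h s, (Fintype.equivFin F s : ℕ))
  have keyinj : Function.Injective key := by
    intro a b hab
    have h2 : ((Fintype.equivFin F a : ℕ)) = (Fintype.equivFin F b : ℕ) :=
      congrArg (fun z => (ofLex z).2) hab
    exact (Fintype.equivFin F).injective (Fin.ext h2)
  letI : LinearOrder F := LinearOrder.lift' key keyinj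
  have hkey_le : ∀ a b : F, a ≤ b ↔ key a ≤ key b := fun a b => Iff.rfl
  have hlt : ∀ s u : F, r s u → ¬ r u s → s < u := by
    intro s u hsu hus
    have hne : s ≠ u := by rintro rfl; exact hus hsu
    have : key s ≤ key u := le_of_lt (by
      rw [Prod.Lex.lt_iff]; exact Or.inl (hmono s u hsu hus))
    exact lt_of_le_of_ne ((hkey_le s u).2 this) hne
  -- the embedding into lex order on F → Bool
  set V := {p : Set F // p ∈ ({S : Set F | ∃ t : F, S = {s : F | r s t}} ∪ {∅})} with hV
  let sk : V → Lex (F → Bool) := fun p => toLex fun x => decide (x ∈ p.1)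
  have skinj : Function.Injective sk := by
    intro a b hab
    apply Subtype.ext
    ext x
    have : decide (x ∈ a.1) = decide (x ∈ b.1) := congrFun hab x
    simpa [decide_eq_decide] using this
  -- characterization of the strict order
  have sklt : ∀ a b : V, sk a < sk b ↔
      ∃ d, (∀ j, j < d → (j ∈ a.1 ↔ j ∈ b.1)) ∧ d ∉ a.1 ∧ d ∈ b.1 := by
    intro a b
    constructor
    · rintro ⟨d, hj, hd⟩
      rw [Bool.lt_iff] at hd
      refine ⟨d, fun j hjd => ?_, ?_, ?_⟩
      · have h3 : decide (j ∈ a.1) = decide (j ∈ b.1) := hj j hjd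
        simpa [decide_eq_decide] using h3
      · have h3 : decide (d ∈ a.1) = false := hd.1
        simpa using h3
      · have h3 : decide (d ∈ b.1) = true := hd.2
        simpa using h3
    · rintro ⟨d, hj, hd1, hd2⟩
      refine ⟨d, fun j hjd => ?_, ?_⟩
      · show decide (j ∈ a.1) = decide (j ∈ b.1)
        simpa [decide_eq_decide] using hj j hjd
      · show decide (d ∈ a.1) < decide (d ∈ b.1)
        rw [Bool.lt_iff]
        simp [hd1, hd2]
  -- proper subset implies strict order
  have hsub : ∀ a b : V, a.1 ⊂ b.1 → sk a < sk b := by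
    intro a b hab
    have hne : (b.1 \ a.1).Nonempty := Set.nonempty_of_ssubset hab
    obtain ⟨d, hd, hmin⟩ := Set.exists_min_image (b.1 \ a.1) id (Set.toFinite _) hne
    refine (sklt a b).2 ⟨d, fun j hjd => ?_, hd.2, hd.1⟩
    constructor
    · exact fun hja => hab.1 hja
    · intro hjb
      by_contra hja
      exact absurd (hmin j ⟨hjb, hja⟩) (not_le.2 hjd)
  refine ⟨fun p q => sk p ≤ sk q, ?_, ?_, ?_⟩
  · exact { refl := fun a => le_refl _
            trans := fun a b c hab hbc => le_trans hab hbc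
            antisymm := fun a b hab hba => skinj (le_antisymm hab hba)
            total := fun a b => by
              have tri := (Pi.isTrichotomous_lex (ι := F) (· < ·)
                  (fun {i} => ((· < ·) : Bool → Bool → Prop))
                  (Finite.to_wellFoundedLT : WellFoundedLT F).wf).trichotomous
              by_cases h1 : sk a < sk b
              · exact Or.inl (le_of_lt h1)
              by_cases h2 : sk b < sk a
              · exact Or.inr (le_of_lt h2)
              exact Or.inl (le_of_eq (tri (ofLex (sk a)) (ofLex (sk b)) h1 h2)) }
  · intro p q hpq
    exact le_of_lt (hsub p q hpq)
  · -- convexity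
    intro t p q v hpv hvq htp htq
    by_contra htv
    -- p' = ν t
    have hp'mem : {s | r s t} ∈ ({S : Set F | ∃ t : F, S = {s : F | r s t}} ∪ {∅}) :=
      Or.inl ⟨t, rfl⟩
    set p' : V := ⟨{s | r s t}, hp'mem⟩ with hp'
    have htp' : t ∈ p'.1 := hrefl t
    -- q = ν y with r t y
    obtain ⟨y, hy⟩ : ∃ y, q.1 = {s | r s y} := by
      rcases q.2 with hq | hq
      · exact hq
      · exfalso; rw [Set.mem_singleton_iff] at hq; rw [hq] at htq; exact htq
    have hty : r t y := by rw [hy] at htq; exact htq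
    -- p' ⊆ p
    have hp'p : p'.1 ⊆ p.1 := by
      rcases p.2 with hp | hp
      · obtain ⟨x, hx⟩ := hp
        rw [hx] at htp ⊢
        exact fun s hs => htrans s t x hs htp
      · exfalso; rw [Set.mem_singleton_iff] at hp; rw [hp] at htp; exact htp
    -- sk p' ≤ sk v
    have h1 : sk p' ≤ sk v := by
      rcases eq_or_ne p'.1 p.1 with he | he
      · have : p' = p := Subtype.ext he
        rw [this]; exact hpv
      · exact le_trans (le_of_lt (hsub p' p ⟨hp'p, fun hc => he (le_antisymm hp'p hc)⟩)) hpv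
    have hp'v : sk p' < sk v :=
      lt_of_le_of_ne h1 (fun hc => htv ((skinj hc) ▸ htp'))
    obtain ⟨d, hdj, hdp', hdv⟩ := (sklt p' v).1 hp'v
    -- d < t
    have hdt : d < t := by
      rcases lt_trichotomy d t with hlt' | heq | hgt
      · exact hlt'
      · exact absurd (heq ▸ hdv) htv
      · exact absurd ((hdj t hgt).1 htp') htv
    -- d ∉ q
    have hdrt : ¬ r d t := hdp'
    have hdq : d ∉ q.1 := by
      intro hdq
      rw [hy] at hdq
      rcases hforest y d t hdq hty with h' | h'
      · exact hdrt h'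
      · exact absurd (hlt t d h' hdrt) (not_lt.2 (le_of_lt hdt))
    -- sk v < sk q
    have hvq' : sk v < sk q :=
      lt_of_le_of_ne hvq (fun hc => hdq ((skinj hc) ▸ hdv))
    obtain ⟨e, hej, hev, heq⟩ := (sklt v q).1 hvq'
    -- e < d
    have hed : e < d := by
      rcases lt_trichotomy e d with hlt' | heq' | hgt
      · exact hlt'
      · exact absurd (heq' ▸ hdv) hev
      · exact absurd ((hej d hgt).1 hdv) hdq
    rcases Classical.em (r e t) with hret | hret
    · -- e ∈ p' \ v, contradicts d's property
      exact hev ((hdj e hed).1 hret)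
    · -- forest gives t < e, then use d's property at t
      have hrey : r e y := by rw [hy] at heq; exact heq
      have hrte : r t e := by
        rcases hforest y e t hrey hty with h' | h'
        · exact absurd h' hret
        · exact h'
      have hte : t < e := hlt t e hrte hret
      exact htv ((hdj t (lt_trans hte hed)).1 htp')
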